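/- For 1 ≤ p ≤ ∞, the resistance perturbation distance d_{rp(p)}(G⁽¹⁾, G⁽²⁾) = ‖R⁽¹⁾ − R⁽²⁾‖_p (the entrywise p-norm of the difference of effective resistance matrices) is a metric on the space of connected, weighted, undirected graphs on a fixed vertex set. -/

import Mathlib

open Matrix Finset

/-- `A` is a (weighted) adjacency matrix: symmetric, nonnegative, no self-loops. -/
def IsAdjMat {n : ℕ} (A : Matrix (Fin n) (Fin n) ℝ) : Prop :=
  A.IsSymm ∧ (∀ i j, 0 ≤ A i j) ∧ ∀ i, A i i = 0

/-- Combinatorial Laplacian `L = D - A`. -/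
def lap {n : ℕ} (A : Matrix (Fin n) (Fin n) ℝ) : Matrix (Fin n) (Fin n) ℝ :=
  Matrix.diagonal (fun i => ∑ j, A i j) - A

/-- Connectivity: the kernel of the Laplacian is spanned by the all-ones vector. -/
def IsConnectedLap {n : ℕ} (L : Matrix (Fin n) (Fin n) ℝ) : Prop :=
  ∀ v : Fin n → ℝ, L.mulVec v = 0 → ∃ c : ℝ, v = fun _ => c

/-- `Ld` is the Moore–Penrose pseudoinverse of `L`. -/
def IsMoorePenrose {n : ℕ} (L Ld : Matrix (Fin n) (Fin n) ℝ) : Prop :=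
  L * Ld * L = L ∧ Ld * L * Ld = Ld ∧ (L * Ld)ᵀ = L * Ld ∧ (Ld * L)ᵀ = Ld * L

/-- Effective resistance `R_ij = L†_ii + L†_jj - 2 L†_ij`. -/
def effR {n : ℕ} (Ld : Matrix (Fin n) (Fin n) ℝ) (i j : Fin n) : ℝ :=
  Ld i i + Ld j j - 2 * Ld i j

/-- The matrix of effective resistances. -/
def Rmat {n : ℕ} (Ld : Matrix (Fin n) (Fin n) ℝ) : Matrix (Fin n) (Fin n) ℝ :=
  Matrix.of fun i j => effR Ld i j

/-- Entrywise p-norm distance between resistance matrices, `1 ≤ p < ∞`. -/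
noncomputable def drpP {n : ℕ} (p : ℝ) (R₁ R₂ : Matrix (Fin n) (Fin n) ℝ) : ℝ :=
  (∑ i, ∑ j, |R₁ i j - R₂ i j| ^ p) ^ (1 / p)

/-- Entrywise ∞-norm distance between resistance matrices. -/
noncomputable def drpInf {n : ℕ} (R₁ R₂ : Matrix (Fin n) (Fin n) ℝ) : ℝ :=
  ⨆ i : Fin n, ⨆ j : Fin n, |R₁ i j - R₂ i j|

lemma mp_unique {n : ℕ} {L M N : Matrix (Fin n) (Fin n) ℝ}
    (hM : IsMoorePenrose L M) (hN : IsMoorePenrose L N) : M = N := by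
  obtain ⟨h1, h2, h3, h4⟩ := hM
  obtain ⟨g1, g2, g3, g4⟩ := hN
  have hA : L * N = L * M := by
    calc L * N = (L * N)ᵀ := g3.symm
      _ = (L * M * L * N)ᵀ := by rw [h1]
      _ = (L * N)ᵀ * (L * M)ᵀ := by rw [mul_assoc (L*M) L N, transpose_mul]
      _ = (L * N) * (L * M) := by rw [g3, h3]
      _ = (L * N * L) * M := by rw [mul_assoc, mul_assoc, mul_assoc]
      _ = L * M := by rw [g1]
  have hB : N * L = M * L := by
    calc N * L = (N * L)ᵀ := g4.symm
      _ = (N * (L * M * L))ᵀ := by rw [h1]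
      _ = ((N * L) * (M * L))ᵀ := by rw [mul_assoc, mul_assoc]
      _ = (M * L)ᵀ * (N * L)ᵀ := by rw [transpose_mul]
      _ = (M * L) * (N * L) := by rw [g4, h4]
      _ = M * (L * N * L) := by rw [mul_assoc, mul_assoc]
      _ = M * L := by rw [g1]
  calc M = M * L * M := h2.symm
    _ = M * (L * M) := mul_assoc _ _ _
    _ = M * (L * N) := by rw [hA]
    _ = M * L * N := (mul_assoc _ _ _).symm
    _ = N * L * N := by rw [hB]
    _ = N := g2

lemma mp_swap {n : ℕ} {L Ld : Matrix (Fin n) (Fin n) ℝ}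
    (h : IsMoorePenrose L Ld) : IsMoorePenrose Ld L :=
  ⟨h.2.1, h.1, h.2.2.2, h.2.2.1⟩

lemma mp_transpose {n : ℕ} {L Ld : Matrix (Fin n) (Fin n) ℝ}
    (h : IsMoorePenrose L Ld) : IsMoorePenrose Lᵀ Ldᵀ := by
  obtain ⟨h1, h2, h3, h4⟩ := h
  refine ⟨?_, ?_, ?_, ?_⟩
  · rw [← transpose_mul, ← transpose_mul, ← mul_assoc, h1]
  · rw [← transpose_mul, ← transpose_mul, ← mul_assoc, h2]
  · rw [← transpose_mul, transpose_transpose]; exact h4.symm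
  · rw [← transpose_mul, transpose_transpose]; exact h3.symm

lemma lap_transpose {n : ℕ} {A : Matrix (Fin n) (Fin n) ℝ} (hA : IsAdjMat A) :
    (lap A)ᵀ = lap A := by
  unfold lap
  rw [transpose_sub, diagonal_transpose, hA.1]

lemma Ld_symm {n : ℕ} {L Ld : Matrix (Fin n) (Fin n) ℝ} (hL : Lᵀ = L)
    (hMP : IsMoorePenrose L Ld) : Ldᵀ = Ld :=
  (mp_unique hMP (hL ▸ mp_transpose hMP)).symm

lemma lap_rowsum {n : ℕ} (A : Matrix (Fin n) (Fin n) ℝ) (i : Fin n) :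
    ∑ j, lap A i j = 0 := by
  simp [lap, Matrix.sub_apply, diagonal_apply, Finset.sum_ite_eq, Finset.sum_sub_distrib]

lemma Ld_rowsum {n : ℕ} {A L Ld : Matrix (Fin n) (Fin n) ℝ} (hA : IsAdjMat A)
    (hL : L = lap A) (hMP : IsMoorePenrose L Ld) (i : Fin n) :
    ∑ j, Ld i j = 0 := by
  have hLs : Lᵀ = L := by rw [hL]; exact lap_transpose hA
  have hLds : Ldᵀ = Ld := Ld_symm hLs hMP
  have hcomm : Ld * L = L * Ld := by
    calc Ld * L = Ldᵀ * Lᵀ := by rw [hLds, hLs]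
      _ = (L * Ld)ᵀ := (transpose_mul _ _).symm
      _ = L * Ld := hMP.2.2.1
  set u : Fin n → ℝ := fun _ => 1 with hu
  have hLu : L *ᵥ u = 0 := by
    funext k
    simp [mulVec, dotProduct, hu, hL, lap_rowsum]
  have hLdu : Ld *ᵥ u = 0 := by
    calc Ld *ᵥ u = (Ld * L * Ld) *ᵥ u := by rw [hMP.2.1]
      _ = (Ld * (L * Ld)) *ᵥ u := by rw [mul_assoc]
      _ = (Ld * (Ld * L)) *ᵥ u := by rw [← hcomm]
      _ = (Ld * Ld) *ᵥ (L *ᵥ u) := by rw [← mul_assoc, ← mulVec_mulVec]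
      _ = 0 := by rw [hLu, mulVec_zero]
  have := congrFun hLdu i
  simpa [mulVec, dotProduct, hu] using this

lemma rowsumR {n : ℕ} {Ld : Matrix (Fin n) (Fin n) ℝ}
    (r : ∀ i, ∑ j, Ld i j = 0) (i : Fin n) :
    ∑ k, Rmat Ld i k = n * Ld i i + ∑ k, Ld k k := by
  simp only [Rmat, effR, of_apply]
  rw [Finset.sum_sub_distrib, Finset.sum_add_distrib, Finset.sum_const, ← Finset.mul_sum, r i]
  simp [Finset.card_univ, nsmul_eq_mul]

lemma totR {n : ℕ} {Ld : Matrix (Fin n) (Fin n) ℝ}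
    (r : ∀ i, ∑ j, Ld i j = 0) :
    ∑ i, ∑ k, Rmat Ld i k = 2 * n * ∑ k, Ld k k := by
  rw [Finset.sum_congr rfl fun i _ => rowsumR r i]
  rw [Finset.sum_add_distrib, ← Finset.mul_sum, Finset.sum_const, Finset.card_univ]
  simp [nsmul_eq_mul]
  ring

lemma Ld_eq_of_R_eq {n : ℕ} (hn : 0 < n) {Ld₁ Ld₂ : Matrix (Fin n) (Fin n) ℝ}
    (r1 : ∀ i, ∑ j, Ld₁ i j = 0) (r2 : ∀ i, ∑ j, Ld₂ i j = 0)
    (hR : Rmat Ld₁ = Rmat Ld₂) : Ld₁ = Ld₂ := by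
  have hn' : (n : ℝ) ≠ 0 := Nat.cast_ne_zero.mpr hn.ne'
  have htr : ∑ k, Ld₁ k k = ∑ k, Ld₂ k k := by
    have h := totR r1
    rw [hR, totR r2] at h
    have h2 : (2 * (n:ℝ)) ≠ 0 := by positivity
    exact (mul_left_cancel₀ h2 h).symm
  have hdiag : ∀ i, Ld₁ i i = Ld₂ i i := by
    intro i
    have h := rowsumR r1 i
    rw [hR, rowsumR r2 i] at h
    refine mul_left_cancel₀ hn' ?_
    linarith
  ext i j
  have h := congrFun (congrFun hR i) j
  simp only [Rmat, effR, of_apply] at h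
  have d1 := hdiag i
  have d2 := hdiag j
  linarith

lemma A_eq_of_R_eq {n : ℕ} (hn : 0 < n) {A₁ L₁ Ld₁ A₂ L₂ Ld₂ : Matrix (Fin n) (Fin n) ℝ}
    (hA₁ : IsAdjMat A₁) (hL₁ : L₁ = lap A₁) (hMP₁ : IsMoorePenrose L₁ Ld₁)
    (hA₂ : IsAdjMat A₂) (hL₂ : L₂ = lap A₂) (hMP₂ : IsMoorePenrose L₂ Ld₂)
    (hR : Rmat Ld₁ = Rmat Ld₂) : A₁ = A₂ := by
  have hLd : Ld₁ = Ld₂ :=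
    Ld_eq_of_R_eq hn (Ld_rowsum hA₁ hL₁ hMP₁) (Ld_rowsum hA₂ hL₂ hMP₂) hR
  have hL : L₁ = L₂ := by
    refine mp_unique (mp_swap hMP₁) ?_
    rw [hLd]
    exact mp_swap hMP₂
  ext i j
  by_cases hij : i = j
  · subst hij; rw [hA₁.2.2, hA₂.2.2]
  · have e1 : lap A₁ i j = -A₁ i j := by
      simp [lap, Matrix.sub_apply, diagonal_apply_ne _ hij]
    have e2 : lap A₂ i j = -A₂ i j := by
      simp [lap, Matrix.sub_apply, diagonal_apply_ne _ hij]
    have := congrFun (congrFun (hL₁ ▸ hL₂ ▸ hL) i) j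
    rw [e1, e2] at this
    linarith

lemma Ld_eq_of_A_eq {n : ℕ} {A₁ L₁ Ld₁ A₂ L₂ Ld₂ : Matrix (Fin n) (Fin n) ℝ}
    (hL₁ : L₁ = lap A₁) (hMP₁ : IsMoorePenrose L₁ Ld₁)
    (hL₂ : L₂ = lap A₂) (hMP₂ : IsMoorePenrose L₂ Ld₂)
    (hA : A₁ = A₂) : Ld₁ = Ld₂ := by
  have hL : L₁ = L₂ := by rw [hL₁, hL₂, hA]
  exact mp_unique hMP₁ (hL ▸ hMP₂)

lemma drpP_nonneg {n : ℕ} (p : ℝ) (R₁ R₂ : Matrix (Fin n) (Fin n) ℝ) :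
    0 ≤ drpP p R₁ R₂ := by
  unfold drpP
  positivity

lemma drpP_comm {n : ℕ} (p : ℝ) (R₁ R₂ : Matrix (Fin n) (Fin n) ℝ) :
    drpP p R₁ R₂ = drpP p R₂ R₁ := by
  unfold drpP
  congr 1
  exact Finset.sum_congr rfl fun i _ => Finset.sum_congr rfl fun j _ => by
    rw [abs_sub_comm]

lemma drpP_triangle {n : ℕ} {p : ℝ} (hp : 1 ≤ p) (R₁ R₂ R₃ : Matrix (Fin n) (Fin n) ℝ) :
    drpP p R₁ R₃ ≤ drpP p R₁ R₂ + drpP p R₂ R₃ := by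
  have hp0 : 0 < p := lt_of_lt_of_le one_pos hp
  unfold drpP
  have e : ∀ M N : Matrix (Fin n) (Fin n) ℝ, ∑ i, ∑ j, |M i j - N i j| ^ p
      = ∑ x : Fin n × Fin n, |M x.1 x.2 - N x.1 x.2| ^ p := fun M N =>
    (Fintype.sum_prod_type (fun x : Fin n × Fin n => |M x.1 x.2 - N x.1 x.2| ^ p)).symm
  rw [e R₁ R₃, e R₁ R₂, e R₂ R₃]
  calc (∑ x : Fin n × Fin n, |R₁ x.1 x.2 - R₃ x.1 x.2| ^ p) ^ (1 / p)
      ≤ (∑ x : Fin n × Fin n,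
          (|R₁ x.1 x.2 - R₂ x.1 x.2| + |R₂ x.1 x.2 - R₃ x.1 x.2|) ^ p) ^ (1 / p) := by
        apply Real.rpow_le_rpow (by positivity)
        · apply Finset.sum_le_sum
          intro x _
          exact Real.rpow_le_rpow (abs_nonneg _) (abs_sub_le _ _ _) hp0.le
        · positivity
    _ ≤ _ :=
        Real.Lp_add_le_of_nonneg univ hp (fun x _ => abs_nonneg _) (fun x _ => abs_nonneg _)

lemma drpP_eq_zero_iff {n : ℕ} {p : ℝ} (hp : 1 ≤ p) (R₁ R₂ : Matrix (Fin n) (Fin n) ℝ) :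
    drpP p R₁ R₂ = 0 ↔ R₁ = R₂ := by
  have hp0 : 0 < p := lt_of_lt_of_le one_pos hp
  unfold drpP
  constructor
  · intro h
    have hsum : ∑ i, ∑ j, |R₁ i j - R₂ i j| ^ p = 0 := by
      have hnn : (0:ℝ) ≤ ∑ i, ∑ j, |R₁ i j - R₂ i j| ^ p := by positivity
      exact (Real.rpow_eq_zero hnn (by positivity)).mp h
    ext i j
    have h1 := (Finset.sum_eq_zero_iff_of_nonneg
      (fun i _ => Finset.sum_nonneg fun j _ => by positivity)).mp hsum i (mem_univ i)
    have h2 := (Finset.sum_eq_zero_iff_of_nonneg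
      (fun j _ => by positivity)).mp h1 j (mem_univ j)
    have := (Real.rpow_eq_zero (abs_nonneg _) hp0.ne').mp h2
    have := abs_eq_zero.mp this
    linarith
  · intro h
    rw [h]
    simp only [sub_self, abs_zero, Real.zero_rpow hp0.ne', Finset.sum_const_zero]
    exact Real.zero_rpow (by positivity)

lemma drpInf_nonneg {n : ℕ} (hn : 0 < n) (R₁ R₂ : Matrix (Fin n) (Fin n) ℝ) :
    0 ≤ drpInf R₁ R₂ := by
  have : Nonempty (Fin n) := Fin.pos_iff_nonempty.mp hn
  unfold drpInf
  refine le_ciSup_of_le (Set.Finite.bddAbove (Set.finite_range _)) (Classical.arbitrary _) ?_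
  exact le_ciSup_of_le (Set.Finite.bddAbove (Set.finite_range _)) (Classical.arbitrary _)
    (abs_nonneg _)

lemma drpInf_comm {n : ℕ} (R₁ R₂ : Matrix (Fin n) (Fin n) ℝ) :
    drpInf R₁ R₂ = drpInf R₂ R₁ := by
  unfold drpInf
  congr 1
  funext i
  congr 1
  funext j
  rw [abs_sub_comm]

lemma drpInf_triangle {n : ℕ} (hn : 0 < n) (R₁ R₂ R₃ : Matrix (Fin n) (Fin n) ℝ) :
    drpInf R₁ R₃ ≤ drpInf R₁ R₂ + drpInf R₂ R₃ := by
  have : Nonempty (Fin n) := Fin.pos_iff_nonempty.mp hn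
  unfold drpInf
  refine ciSup_le fun i => ciSup_le fun j => ?_
  refine le_trans (abs_sub_le (R₁ i j) (R₂ i j) (R₃ i j)) (add_le_add ?_ ?_) <;>
    exact le_ciSup_of_le (Set.Finite.bddAbove (Set.finite_range _)) i
      (le_ciSup_of_le (Set.Finite.bddAbove (Set.finite_range _)) j le_rfl)

lemma drpInf_eq_zero_iff {n : ℕ} (hn : 0 < n) (R₁ R₂ : Matrix (Fin n) (Fin n) ℝ) :
    drpInf R₁ R₂ = 0 ↔ R₁ = R₂ := by
  have : Nonempty (Fin n) := Fin.pos_iff_nonempty.mp hn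
  unfold drpInf
  constructor
  · intro h
    ext i j
    have hle : |R₁ i j - R₂ i j| ≤ 0 := by
      rw [← h]
      exact le_ciSup_of_le (Set.Finite.bddAbove (Set.finite_range _)) i
        (le_ciSup_of_le (Set.Finite.bddAbove (Set.finite_range _)) j le_rfl)
    have := le_antisymm hle (abs_nonneg _)
    have := abs_eq_zero.mp this
    linarith
  · intro h
    rw [h]
    simp [ciSup_const]

/-- For `1 ≤ p ≤ ∞` the resistance perturbation distance is a metric on the space of
connected weighted undirected graphs on a fixed vertex set: nonnegativity, identity of
indiscernibles, symmetry and the triangle inequality hold (both for finite `p` and for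
`p = ∞`). -/
theorem rp_distance_is_metric (n : ℕ) (hn : 0 < n) (p : ℝ) (hp : 1 ≤ p)
    (A₁ L₁ Ld₁ A₂ L₂ Ld₂ A₃ L₃ Ld₃ : Matrix (Fin n) (Fin n) ℝ)
    (hA₁ : IsAdjMat A₁) (hL₁ : L₁ = lap A₁) (hc₁ : IsConnectedLap L₁)
    (hMP₁ : IsMoorePenrose L₁ Ld₁)
    (hA₂ : IsAdjMat A₂) (hL₂ : L₂ = lap A₂) (hc₂ : IsConnectedLap L₂)
    (hMP₂ : IsMoorePenrose L₂ Ld₂)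
    (hA₃ : IsAdjMat A₃) (hL₃ : L₃ = lap A₃) (hc₃ : IsConnectedLap L₃)
    (hMP₃ : IsMoorePenrose L₃ Ld₃) :
    (0 ≤ drpP p (Rmat Ld₁) (Rmat Ld₂))
    ∧ (drpP p (Rmat Ld₁) (Rmat Ld₂) = drpP p (Rmat Ld₂) (Rmat Ld₁))
    ∧ (drpP p (Rmat Ld₁) (Rmat Ld₃)
        ≤ drpP p (Rmat Ld₁) (Rmat Ld₂) + drpP p (Rmat Ld₂) (Rmat Ld₃))
    ∧ (drpP p (Rmat Ld₁) (Rmat Ld₂) = 0 ↔ A₁ = A₂)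
    ∧ (0 ≤ drpInf (Rmat Ld₁) (Rmat Ld₂))
    ∧ (drpInf (Rmat Ld₁) (Rmat Ld₂) = drpInf (Rmat Ld₂) (Rmat Ld₁))
    ∧ (drpInf (Rmat Ld₁) (Rmat Ld₃)
        ≤ drpInf (Rmat Ld₁) (Rmat Ld₂) + drpInf (Rmat Ld₂) (Rmat Ld₃))
    ∧ (drpInf (Rmat Ld₁) (Rmat Ld₂) = 0 ↔ A₁ = A₂) := by
  have hR_iff : Rmat Ld₁ = Rmat Ld₂ ↔ A₁ = A₂ :=
    ⟨A_eq_of_R_eq hn hA₁ hL₁ hMP₁ hA₂ hL₂ hMP₂,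
     fun h => by rw [Ld_eq_of_A_eq hL₁ hMP₁ hL₂ hMP₂ h]⟩
  exact ⟨drpP_nonneg p _ _, drpP_comm p _ _, drpP_triangle hp _ _ _,
    (drpP_eq_zero_iff hp _ _).trans hR_iff, drpInf_nonneg hn _ _, drpInf_comm _ _,
    drpInf_triangle hn _ _ _, (drpInf_eq_zero_iff hn _ _).trans hR_iff⟩
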